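/- Let f : C → ℝ be convex on a convex set C in a real vector space, x₁,…,xₙ ∈ C, and let p, q be positive n-tuples with ∑pᵢ = ∑qᵢ = 1. Then J(f,x,p) ≤ M · J(f,x,q), where M = max_{1≤i≤n} (pᵢ/qᵢ). -/

import Mathlib

/-- Dragomir's upper bound: `J(f,x,p) ≤ M · J(f,x,q)` with `M = maxᵢ pᵢ/qᵢ`. -/
theorem stmt1 {E : Type*} [AddCommGroup E] [Module ℝ E] {C : Set E}
    (f : E → ℝ) (hf : ConvexOn ℝ C f) {n : ℕ} (hn : 0 < n)
    (x : Fin n → E) (hx : ∀ i, x i ∈ C)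
    (p q : Fin n → ℝ) (hp : ∀ i, 0 < p i) (hq : ∀ i, 0 < q i)
    (hps : ∑ i, p i = 1) (hqs : ∑ i, q i = 1) :
    ∑ i, p i * f (x i) - f (∑ i, p i • x i) ≤
    (Finset.univ.sup' ⟨⟨0, hn⟩, Finset.mem_univ _⟩ (fun i => p i / q i)) *
      (∑ i, q i * f (x i) - f (∑ i, q i • x i)) := by
  set M := Finset.univ.sup' ⟨⟨0, hn⟩, Finset.mem_univ _⟩ (fun i => p i / q i) with hM
  have hMi : ∀ i, p i ≤ M * q i := by
    intro i
    have h := Finset.le_sup' (fun i => p i / q i) (Finset.mem_univ i)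
    rw [div_le_iff₀ (hq i)] at h
    simpa [hM, mul_comm] using h
  have hM1 : 1 ≤ M := by
    by_contra h
    push_neg at h
    have : ∀ i, M * q i < q i := fun i => by nlinarith [hq i]
    have hlt : ∑ i, p i < ∑ i, q i := by
      refine Finset.sum_lt_sum_of_nonempty ⟨⟨0, hn⟩, Finset.mem_univ _⟩ fun i _ => ?_
      exact lt_of_le_of_lt (hMi i) (this i)
    rw [hps, hqs] at hlt; exact lt_irrefl _ hlt
  rcases eq_or_lt_of_le hM1 with hMeq | hMgt
  · -- M = 1, so p = q
    have hpq : ∀ i, p i = q i := by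
      have h0 : ∑ i, (q i - p i) = 0 := by
        rw [Finset.sum_sub_distrib, hps, hqs]; ring
      have hnn : ∀ i ∈ Finset.univ, 0 ≤ q i - p i := fun i _ => by
        have := hMi i; rw [← hMeq] at this; linarith
      intro i
      have := (Finset.sum_eq_zero_iff_of_nonneg hnn).mp h0 i (Finset.mem_univ i)
      linarith
    have h1 : ∑ i, p i * f (x i) = ∑ i, q i * f (x i) :=
      Finset.sum_congr rfl fun i _ => by rw [hpq i]
    have h2 : ∑ i, p i • x i = ∑ i, q i • x i :=
      Finset.sum_congr rfl fun i _ => by rw [hpq i]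
    rw [h1, h2, ← hMeq]
    linarith
  · -- M > 1
    set w : Fin n → ℝ := fun i => (M * q i - p i) / (M - 1) with hw
    have hMpos : (0:ℝ) < M := by linarith
    have hM1pos : (0:ℝ) < M - 1 := by linarith
    have hw0 : ∀ i ∈ Finset.univ, 0 ≤ w i := fun i _ =>
      div_nonneg (by linarith [hMi i]) hM1pos.le
    have hws : ∑ i, w i = 1 := by
      rw [hw, ← Finset.sum_div]
      rw [Finset.sum_sub_distrib, ← Finset.mul_sum, hps, hqs]
      field_simp
    have hymem : (∑ i, w i • x i) ∈ C :=
      hf.1.sum_mem hw0 hws (fun i _ => hx i)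
    have hpmem : (∑ i, p i • x i) ∈ C :=
      hf.1.sum_mem (fun i _ => (hp i).le) hps (fun i _ => hx i)
    have hfy : f (∑ i, w i • x i) ≤ ∑ i, w i * f (x i) :=
      hf.map_sum_le hw0 hws (fun i _ => hx i)
    have hrw : ∑ i, w i * f (x i) =
        (M * (∑ i, q i * f (x i)) - ∑ i, p i * f (x i)) / (M - 1) := by
      rw [eq_div_iff hM1pos.ne', Finset.sum_mul, Finset.mul_sum,
        ← Finset.sum_sub_distrib]
      refine Finset.sum_congr rfl fun i _ => ?_
      rw [hw]; field_simp
    have h2 : (M - 1) * f (∑ i, w i • x i) ≤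
        M * (∑ i, q i * f (x i)) - ∑ i, p i * f (x i) := by
      rw [hrw] at hfy
      rw [← le_div_iff₀' hM1pos]
      rwa [mul_comm] at hfy ⊢
    -- decomposition of q-barycenter
    have hdec : ∑ i, q i • x i =
        (1/M) • (∑ i, p i • x i) + ((M-1)/M) • (∑ i, w i • x i) := by
      rw [Finset.smul_sum, Finset.smul_sum, ← Finset.sum_add_distrib]
      refine Finset.sum_congr rfl fun i _ => ?_
      rw [smul_smul, smul_smul, ← add_smul]
      congr 1
      rw [hw]; field_simp; ring
    have hconv : f (∑ i, q i • x i) ≤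
        (1/M) * f (∑ i, p i • x i) + ((M-1)/M) * f (∑ i, w i • x i) := by
      rw [hdec]
      exact hf.2 hpmem hymem (div_nonneg zero_le_one hMpos.le)
        (div_nonneg hM1pos.le hMpos.le)
        (by rw [← add_div]; field_simp; ring)
    have hcm : M * f (∑ i, q i • x i) ≤
        f (∑ i, p i • x i) + (M - 1) * f (∑ i, w i • x i) := by
      have := mul_le_mul_of_nonneg_left hconv hMpos.le
      have hM0 : M ≠ 0 := hMpos.ne'
      calc M * f (∑ i, q i • x i)
          ≤ M * ((1/M) * f (∑ i, p i • x i) + ((M-1)/M) * f (∑ i, w i • x i)) := this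
        _ = f (∑ i, p i • x i) + (M - 1) * f (∑ i, w i • x i) := by field_simp
    nlinarith [h2, hcm]
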